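/- Under the string partition setup, let W'_i = S[Ω(i), PSA[i]-1] · #_i where #_0 < #_1 < ... < #_k < $ < a for all a ∈ Σ. If S[i..] < S[j..] lexicographically (0 ≤ i, j ≤ n), then W'_{word(i)}[position(i)..] < W'_{word(j)}[position(j)..] lexicographically. -/

import Mathlib

/-- Suffix of the extended string `S` (length `n`, sentinel `S n = 0`) starting at `i`,
as a list of characters. -/
def sfx (S : ℕ → ℕ) (n i : ℕ) : List ℕ :=
  (List.range (n + 1 - i)).map (fun t => S (i + t))

/-- `S` is a string of length `n` over a positive alphabet with the unique smallest
sentinel `0` appended at position `n`. -/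
def Sentinel (S : ℕ → ℕ) (n : ℕ) : Prop :=
  S n = 0 ∧ ∀ i < n, 0 < S i

/-- `SA` is the suffix array of `S` on positions `0..n`: a bijection of `{0,…,n}`
listing the suffixes in strictly increasing lexicographic order. -/
def IsSuffixArray (S : ℕ → ℕ) (n : ℕ) (SA : ℕ → ℕ) : Prop :=
  Set.BijOn SA (Set.Iic n) (Set.Iic n) ∧
  ∀ i j : ℕ, i ≤ n → j ≤ n → i < j →
    List.Lex (· < ·) (sfx S n (SA i)) (sfx S n (SA j))

/-- `Ω(j) = max({-1} ∪ {t ∈ PSA : t ≤ PSA[j]-1})`, where `PSA = SA[0..k]`. -/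
def Omega (SA : ℕ → ℕ) (k j : ℕ) : ℤ :=
  (insert (-1 : ℤ)
    (((Finset.range (k+1)).filter (fun t => SA t < SA j)).image
      (fun t => (SA t : ℤ)))).max' (Finset.insert_nonempty _ _)

/-- Character of `S` at an integer position: positions `-1` and `n` carry the
sentinel `0` (written `$`), characters of `Σ` are positive. -/
def Sc (S : ℕ → ℕ) (n : ℕ) (q : ℤ) : ℤ :=
  if 0 ≤ q ∧ q < n then (S q.toNat : ℤ) else 0

/-- `BWT(S)[i] = S[SA[i]-1]` with `S[-1] = $`. -/
def bwtS (S : ℕ → ℕ) (n : ℕ) (SA : ℕ → ℕ) (i : ℕ) : ℤ :=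
  Sc S n ((SA i : ℤ) - 1)

/-- The word `W_j = S[Ω(j) .. PSA[j]-1]` as a list of characters. -/
def wordList (S : ℕ → ℕ) (n : ℕ) (SA : ℕ → ℕ) (k j : ℕ) : List ℤ :=
  (List.range ((SA j : ℤ) - Omega SA k j).toNat).map
    (fun t => Sc S n (Omega SA k j + t))

/-- The marked word `W'_j = W_j · #_j`, where the distinct markers are encoded as
`#_j = j - (k+1)`, so that `#_0 < … < #_k < $ = 0 < Σ`. -/
def wordM (S : ℕ → ℕ) (n : ℕ) (SA : ℕ → ℕ) (k j : ℕ) : List ℤ :=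
  wordList S n SA k j ++ [(j : ℤ) - (k + 1)]

/-- A position `q ∈ {0,…,n}` of `S` viewed in `{-1,…,n-1}`: position `n` is
identified with `-1` (first right rotation). -/
def posZ (n q : ℕ) : ℤ := if q = n then -1 else (q : ℤ)

/-- `SAW`/`DAW` form the (suffix array, document array) pair for the collection
`Wc 0, …, Wc (l-1)`: the `i`-th lexicographically smallest of the `m` suffixes of
the collection is `(Wc (DAW i)).drop (SAW i)`. -/
def IsMSA (Wc : ℕ → List ℤ) (l m : ℕ) (SAW DAW : ℕ → ℕ) : Prop :=
  (∀ i < m, DAW i < l ∧ SAW i < (Wc (DAW i)).length) ∧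
  (∀ j < l, ∀ p < (Wc j).length, ∃! i, i < m ∧ DAW i = j ∧ SAW i = p) ∧
  ∀ i j : ℕ, i < m → j < m → i < j →
    List.Lex (· < ·) ((Wc (DAW i)).drop (SAW i)) ((Wc (DAW j)).drop (SAW j))

/-- Multi-string BWT: the character cyclically preceding the `i`-th smallest
suffix within its word. -/
def bwtW (Wc : ℕ → List ℤ) (SAW DAW : ℕ → ℕ) (i : ℕ) : ℤ :=
  (Wc (DAW i)).getD ((SAW i + (Wc (DAW i)).length - 1) % (Wc (DAW i)).length) 0

section Helpers
variable {α : Type*} [LinearOrder α]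

lemma lex_cons_iff' {x y : α} {l₁ l₂ : List α} :
    List.Lex (· < ·) (x :: l₁) (y :: l₂) ↔ x < y ∨ (x = y ∧ List.Lex (· < ·) l₁ l₂) := by
  constructor
  · intro h
    cases h with
    | cons h => exact Or.inr ⟨rfl, h⟩
    | rel h => exact Or.inl h
  · rintro (h | ⟨rfl, h⟩)
    · exact List.Lex.rel h
    · exact List.Lex.cons h

lemma lex_map_range_elim :
    ∀ (a : ℕ) (f g : ℕ → α) (b : ℕ),
    List.Lex (· < ·) ((List.range a).map f) ((List.range b).map g) →
    ∃ m, (∀ t, t < m → f t = g t) ∧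
      ((m = a ∧ a < b) ∨ (m < a ∧ m < b ∧ f m < g m))
  | 0, f, g, b, h => by
      refine ⟨0, fun t ht => absurd ht (Nat.not_lt_zero t), Or.inl ⟨rfl, ?_⟩⟩
      rcases Nat.eq_zero_or_pos b with rfl | hb
      · simp at h
      · exact hb
  | (a+1), f, g, 0, h => by
      simp at h
  | (a+1), f, g, (b+1), h => by
      rw [List.range_succ_eq_map, List.range_succ_eq_map] at h
      simp only [List.map_cons, List.map_map] at h
      rcases lex_cons_iff'.1 h with h0 | ⟨h0, h'⟩
      · exact ⟨0, fun t ht => absurd ht (Nat.not_lt_zero t),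
          Or.inr ⟨Nat.succ_pos a, Nat.succ_pos b, h0⟩⟩
      · obtain ⟨m, hm, hcase⟩ := lex_map_range_elim a (f ∘ Nat.succ) (g ∘ Nat.succ) b h'
        refine ⟨m + 1, fun t ht => ?_, ?_⟩
        · rcases Nat.eq_zero_or_pos t with rfl | htp
          · exact h0
          · obtain ⟨t', rfl⟩ := Nat.exists_eq_succ_of_ne_zero htp.ne'
            exact hm t' (by omega)
        · rcases hcase with ⟨rfl, hab⟩ | ⟨h1, h2, h3⟩
          · exact Or.inl ⟨rfl, by omega⟩
          · exact Or.inr ⟨by omega, by omega, h3⟩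

lemma lex_map_range_diff (f g : ℕ → α) (a b m : ℕ)
    (hma : m < a) (hmb : m < b) (hd : f m < g m) (hfg : ∀ t, t < m → f t = g t) :
    List.Lex (· < ·) ((List.range a).map f) ((List.range b).map g) := by
  have h1 : (List.range m).map f = (List.range m).map g :=
    List.map_congr_left fun t ht => hfg t (List.mem_range.1 ht)
  obtain ⟨s, hs⟩ : ∃ s, a - m = s + 1 := ⟨a - m - 1, by omega⟩
  obtain ⟨u, hu⟩ : ∃ u, b - m = u + 1 := ⟨b - m - 1, by omega⟩
  have ha : a = m + (s + 1) := by omega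
  have hb : b = m + (u + 1) := by omega
  rw [ha, hb, List.range_add (n := m) (m := s+1), List.range_add (n := m) (m := u+1),
    List.range_succ_eq_map (n := s), List.range_succ_eq_map (n := u), List.map_append, List.map_append, h1]
  apply List.Lex.append_left
  exact List.Lex.rel (by simpa using hd)

lemma lex_append_left_cancel :
    ∀ (p : List α) {l₁ l₂ : List α},
      List.Lex (· < ·) (p ++ l₁) (p ++ l₂) → List.Lex (· < ·) l₁ l₂
  | [], _, _, h => h
  | (_ :: p), _, _, h => lex_append_left_cancel p ((List.cons_lex_cons_iff.1 h).resolve_left (lt_irrefl _)).2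

end Helpers

lemma drop_map_range' {β : Type*} (f : ℕ → β) (d ℓ : ℕ) :
    ((List.range (d + ℓ)).map f).drop d = (List.range ℓ).map (fun t => f (d + t)) := by
  rw [List.range_add, List.map_append]
  have h2 := List.drop_left (l₁ := (List.range d).map f)
      (l₂ := ((List.range ℓ).map (fun x => d + x)).map f)
  simpa using h2

lemma map_range_snoc' {α : Type*} (f : ℕ → α) (x : α) (ℓ : ℕ) :
    (List.range ℓ).map f ++ [x] =
      (List.range (ℓ + 1)).map (fun t => if t < ℓ then f t else x) := by
  rw [List.range_succ, List.map_append]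
  congr 1
  · exact (List.map_congr_left fun t ht => by rw [if_pos (List.mem_range.1 ht)]).symm
  · simp


lemma Sc_nonneg (S : ℕ → ℕ) (n : ℕ) (q : ℤ) : 0 ≤ Sc S n q := by
  unfold Sc; split <;> positivity

lemma Sc_posZ (S : ℕ → ℕ) (n i t : ℕ) (hS : Sentinel S n) (hi : i ≤ n) (ht : i + t ≤ n) :
    Sc S n (posZ n i + t) = (S (i + t) : ℤ) := by
  unfold Sc posZ
  rcases eq_or_lt_of_le hi with rfl | hin
  · have ht0 : t = 0 := by omega
    subst ht0
    rw [if_pos rfl, if_neg (by norm_num)]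
    simp [hS.1]
  · rw [if_neg (by omega : i ≠ n)]
    have hcast : (i : ℤ) + t = ((i + t : ℕ) : ℤ) := by push_cast; ring
    rw [hcast]
    rcases eq_or_lt_of_le ht with he | hlt
    · rw [if_neg (by omega), he, hS.1]; simp
    · rw [if_pos ⟨by positivity, by exact_mod_cast hlt⟩, Int.toNat_natCast]

lemma le_Omega (SA : ℕ → ℕ) (k w t : ℕ) (ht : t ≤ k) (hlt : SA t < SA w) :
    (SA t : ℤ) ≤ Omega SA k w := by
  apply Finset.le_max'
  apply Finset.mem_insert_of_mem
  exact Finset.mem_image.2 ⟨t, Finset.mem_filter.2 ⟨Finset.mem_range.2 (by omega), hlt⟩, rfl⟩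

lemma sfx_decomp (S : ℕ → ℕ) (n i ℓ : ℕ) (h : i + ℓ ≤ n) :
    sfx S n i = (List.range ℓ).map (fun t => S (i + t)) ++ sfx S n (i + ℓ) := by
  unfold sfx
  rw [show n + 1 - i = ℓ + (n + 1 - (i + ℓ)) from by omega, List.range_add, List.map_append,
    List.map_map]
  congr 1
  apply List.map_congr_left
  intro t _
  simp only [Function.comp_apply]
  congr 1
  omega

lemma wordList_eq (S : ℕ → ℕ) (n : ℕ) (SA : ℕ → ℕ) (k j : ℕ) :
    wordList S n SA k j = (List.range ((SA j : ℤ) - Omega SA k j).toNat).map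
      (fun t : ℕ => Sc S n (Omega SA k j + (t : ℤ))) := by
  unfold wordList
  rw [show (Bind.bind (List.range ((SA j : ℤ) - Omega SA k j).toNat)
      fun a : ℕ => pure ((a : ℤ))) =
      (List.range ((SA j : ℤ) - Omega SA k j).toNat).map (fun a : ℕ => (a : ℤ)) from
    by exact List.flatMap_pure_eq_map _ _, List.map_map]
  rfl

lemma wordM_drop (S SA : ℕ → ℕ) (n k w : ℕ) (q : ℤ)
    (h1 : Omega SA k w ≤ q) (h2 : q ≤ (SA w : ℤ) - 1) :
    (wordM S n SA k w).drop (q - Omega SA k w).toNat =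
    (List.range (((SA w : ℤ) - q).toNat + 1)).map
      (fun t => if t < ((SA w : ℤ) - q).toNat then Sc S n (q + t) else (w : ℤ) - (k + 1)) := by
  set Ω := Omega SA k w with hΩ
  set d := (q - Ω).toNat with hd
  set ℓ := ((SA w : ℤ) - q).toNat with hℓ
  have hdz : (d : ℤ) = q - Ω := Int.toNat_of_nonneg (by omega)
  have hℓz : (ℓ : ℤ) = (SA w : ℤ) - q := Int.toNat_of_nonneg (by omega)
  have hL : ((SA w : ℤ) - Ω).toNat = d + ℓ := by omega
  unfold wordM
  rw [wordList_eq, ← hΩ, hL]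
  rw [List.drop_append_of_le_length (by rw [List.length_map, List.length_range]; omega),
    drop_map_range']
  rw [show (fun t : ℕ => Sc S n (Ω + ((d + t : ℕ) : ℤ))) = (fun t : ℕ => Sc S n (q + (t : ℤ))) from
    funext fun t => by congr 1; push_cast; omega]
  exact map_range_snoc' _ _ _

/-- if `S[i..] < S[j..]`, then
`W'_{word(i)}[position(i)..] < W'_{word(j)}[position(j)..]`, where `wi = word(i)`
and `wj = word(j)` are characterized by interval membership (position `n` is
identified with `-1` via `posZ`). -/
theorem suffix_order_transfers (S SA : ℕ → ℕ) (n k : ℕ) (hk : k < n)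
    (hS : Sentinel S n) (hSA : IsSuffixArray S n SA)
    (i j wi wj : ℕ) (hi : i ≤ n) (hj : j ≤ n) (hwi : wi ≤ k) (hwj : wj ≤ k)
    (hii : Omega SA k wi ≤ posZ n i ∧ posZ n i ≤ (SA wi : ℤ) - 1)
    (hjj : Omega SA k wj ≤ posZ n j ∧ posZ n j ≤ (SA wj : ℤ) - 1)
    (hlt : List.Lex (· < ·) (sfx S n i) (sfx S n j)) :
    List.Lex (· < ·)
      ((wordM S n SA k wi).drop (posZ n i - Omega SA k wi).toNat)
      ((wordM S n SA k wj).drop (posZ n j - Omega SA k wj).toNat) := by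
  obtain ⟨hΩi, hqi⟩ := hii
  obtain ⟨hΩj, hqj⟩ := hjj
  have hS0 := hS.1
  -- asymmetry of lex order on suffixes
  haveI : IsAsymm ℕ (· < ·) := ⟨fun _ _ => lt_asymm⟩
  have hasymm : ∀ {l₁ l₂ : List ℕ},
      List.Lex (· < ·) l₁ l₂ → List.Lex (· < ·) l₂ l₁ → False :=
    fun h h' => asymm (r := List.Lex (· < · : ℕ → ℕ → Prop)) h h'
  have hrank : ∀ a b : ℕ, a ≤ n → b ≤ n →
      List.Lex (· < ·) (sfx S n (SA a)) (sfx S n (SA b)) → a < b := by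
    intro a b ha hb h
    by_contra hab
    push_neg at hab
    rcases eq_or_lt_of_le hab with rfl | hba
    · exact hasymm h h
    · exact hasymm h (hSA.2 b a hb ha hba)
  -- extract the first difference of the two suffixes
  obtain ⟨m, Heq, hcase⟩ :=
    lex_map_range_elim (n + 1 - i) (fun t => S (i + t)) (fun t => S (j + t)) (n + 1 - j) hlt
  rcases hcase with ⟨hm, hab⟩ | ⟨hmi, hmj, Hlt⟩
  · -- proper-prefix case is impossible thanks to the sentinel
    exfalso
    have hji : j < i := by omega
    have hneq := Heq (n - i) (by omega)
    rw [show i + (n - i) = n from by omega] at hneq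
    have hpos := hS.2 (j + (n - i)) (by omega)
    omega
  -- the genuine mismatch case
  have him : i + m ≤ n := by omega
  have hjm : j + m ≤ n := by omega
  have hSAwi : SA wi ≤ n := Set.mem_Iic.1 (hSA.1.1 (Set.mem_Iic.2 (by omega : wi ≤ n)))
  have hSAwj : SA wj ≤ n := Set.mem_Iic.1 (hSA.1.1 (Set.mem_Iic.2 (by omega : wj ≤ n)))
  obtain ⟨ℓi, hℓiz⟩ : ∃ l : ℕ, (l : ℤ) = (SA wi : ℤ) - posZ n i :=
    ⟨((SA wi : ℤ) - posZ n i).toNat, Int.toNat_of_nonneg (by omega)⟩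
  obtain ⟨ℓj, hℓjz⟩ : ∃ l : ℕ, (l : ℤ) = (SA wj : ℤ) - posZ n j :=
    ⟨((SA wj : ℤ) - posZ n j).toNat, Int.toNat_of_nonneg (by omega)⟩
  have hℓi1 : 1 ≤ ℓi := by omega
  have hℓj1 : 1 ≤ ℓj := by omega
  rw [wordM_drop S SA n k wi (posZ n i) hΩi hqi, wordM_drop S SA n k wj (posZ n j) hΩj hqj,
    show ((SA wi : ℤ) - posZ n i).toNat = ℓi from by omega,
    show ((SA wj : ℤ) - posZ n j).toNat = ℓj from by omega]
  have hKi : ∀ t : ℕ, i + t ≤ n → Sc S n (posZ n i + t) = (S (i + t) : ℤ) :=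
    fun t ht => Sc_posZ S n i t hS hi ht
  have hKj : ∀ t : ℕ, j + t ≤ n → Sc S n (posZ n j + t) = (S (j + t) : ℤ) :=
    fun t ht => Sc_posZ S n j t hS hj ht
  -- stripping a common prefix of the two suffixes
  have hstrip : ∀ ℓ : ℕ, ℓ ≤ m →
      List.Lex (· < ·) (sfx S n (i + ℓ)) (sfx S n (j + ℓ)) := by
    intro ℓ hℓ
    have h1 : i + ℓ ≤ n := by omega
    have h2 : j + ℓ ≤ n := by omega
    have hpre : (List.range ℓ).map (fun t => S (i + t)) =
        (List.range ℓ).map (fun t => S (j + t)) :=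
      List.map_congr_left fun t ht => Heq t (lt_of_lt_of_le (List.mem_range.1 ht) hℓ)
    have hlt' : List.Lex (· < ·)
        ((List.range ℓ).map (fun t => S (i + t)) ++ sfx S n (i + ℓ))
        ((List.range ℓ).map (fun t => S (j + t)) ++ sfx S n (j + ℓ)) := by
      rw [← sfx_decomp S n i ℓ h1, ← sfx_decomp S n j ℓ h2]; exact hlt
    rw [hpre] at hlt'
    exact lex_append_left_cancel _ hlt'
  -- the impossible configuration
  have hCfalse : ℓj ≤ m → ℓj < ℓi → False := by
    intro h1 h2
    have hjn : j ≠ n := by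
      intro hj'
      have : m = 0 := by omega
      omega
    have hin : i ≠ n := by
      intro hi'
      have : m = 0 := by omega
      omega
    have hqjv : posZ n j = (j : ℤ) := if_neg hjn
    have hqiv : posZ n i = (i : ℤ) := if_neg hin
    have hSAj : SA wj = j + ℓj := by omega
    have hSAi : SA wi = i + ℓi := by omega
    have hplex : List.Lex (· < ·) (sfx S n (i + ℓj)) (sfx S n (SA wj)) := by
      rw [hSAj]; exact hstrip ℓj h1
    have hpn : i + ℓj ≤ n := by omega
    obtain ⟨r, hr, hrp⟩ := hSA.1.2.2 (Set.mem_Iic.2 hpn)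
    rw [← hrp] at hplex
    have hrk : r < wj := hrank r wj (Set.mem_Iic.1 hr) (by omega) hplex
    have hOm := le_Omega SA k wi r (by omega) (by omega)
    omega
  rcases Nat.lt_or_ge m ℓi with hAi | hBi
  · rcases Nat.lt_or_ge m ℓj with hAj | hBj
    · -- Case A: the mismatch is inside both words
      refine lex_map_range_diff _ _ _ _ m (by omega) (by omega) ?_ ?_
      · rw [if_pos hAi, if_pos hAj, hKi m him, hKj m hjm]
        exact_mod_cast Hlt
      · intro t ht
        rw [if_pos (by omega), if_pos (by omega), hKi t (by omega), hKj t (by omega)]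
        exact_mod_cast Heq t ht
    · exact absurd (hCfalse (by omega) (by omega)) not_false
  · rcases Nat.lt_trichotomy ℓi ℓj with h1 | h2 | h3
    · -- Case B1: word i ends first, marker < character
      refine lex_map_range_diff _ _ _ _ ℓi (by omega) (by omega) ?_ ?_
      · rw [if_neg (lt_irrefl ℓi), if_pos h1]
        exact lt_of_lt_of_le (by omega : (wi : ℤ) - (k + 1) < 0) (Sc_nonneg S n _)
      · intro t ht
        rw [if_pos (by omega), if_pos (by omega), hKi t (by omega), hKj t (by omega)]
        exact_mod_cast Heq t (by omega)
    · -- Case B2: both words end at the mismatch, compare markers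
      subst h2
      have hin : i ≠ n := by
        intro hi'
        have : m = 0 := by omega
        omega
      have hjn : j ≠ n := by
        intro hj'
        have : m = 0 := by omega
        omega
      have hqiv : posZ n i = (i : ℤ) := if_neg hin
      have hqjv : posZ n j = (j : ℤ) := if_neg hjn
      have hSAi : SA wi = i + ℓi := by omega
      have hSAj : SA wj = j + ℓi := by omega
      have hlex2 : List.Lex (· < ·) (sfx S n (SA wi)) (sfx S n (SA wj)) := by
        rw [hSAi, hSAj]; exact hstrip ℓi hBi
      have hwlt : wi < wj := hrank wi wj (by omega) (by omega) hlex2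
      refine lex_map_range_diff _ _ _ _ ℓi (by omega) (by omega) ?_ ?_
      · rw [if_neg (lt_irrefl ℓi), if_neg (lt_irrefl ℓi)]
        omega
      · intro t ht
        rw [if_pos (by omega), if_pos (by omega), hKi t (by omega), hKj t (by omega)]
        exact_mod_cast Heq t (by omega)
    · exact absurd (hCfalse (by omega) h3) not_false
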